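/- With the candidate pair relation defined by |ν|/(4Δ) ≤ |ν'| ≤ 4Δ|ν| and d(ν,ν') ≤ 2(|ν| + |ν'|) on quadtree cells (where |ν| is the diameter of cell ν, p(ν) its parent cell with |p(ν)| = 2|ν|, and d the cell-to-cell distance): if (ν, ν') is a candidate pair and p(ν) ≠ p(ν'), then (p(ν), p(ν')) is a candidate pair. -/

import Mathlib

/-- The dyadic quadtree cell at level `k` with indices `(a, b)`. -/
def dyCell (k a b : ℕ) : Set (ℝ × ℝ) :=
  Set.Icc ((a : ℝ) / 2 ^ k) ((a + 1 : ℕ) / 2 ^ k) ×ˢ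
    Set.Icc ((b : ℝ) / 2 ^ k) ((b + 1 : ℕ) / 2 ^ k)

/-- The distance between two sets: the infimum of pairwise point distances. -/
noncomputable def setDist (s t : Set (ℝ × ℝ)) : ℝ :=
  sInf {d : ℝ | ∃ x ∈ s, ∃ y ∈ t, d = dist x y}

/-- The candidate pair relation with parameter `Δ`. -/
noncomputable def CandPair (Δ : ℝ) (s t : Set (ℝ × ℝ)) : Prop :=
  Metric.diam s / (4 * Δ) ≤ Metric.diam t ∧
  Metric.diam t ≤ 4 * Δ * Metric.diam s ∧
  setDist s t ≤ 2 * (Metric.diam s + Metric.diam t)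

lemma diam_dyCell (k a b : ℕ) : Metric.diam (dyCell k a b) = 1 / 2 ^ k := by
  have hw : ∀ c : ℕ, ((c + 1 : ℕ) : ℝ) / 2 ^ k - (c : ℝ) / 2 ^ k = 1 / 2 ^ k := by
    intro c; push_cast; ring
  apply le_antisymm
  · apply Metric.diam_le_of_forall_dist_le (by positivity)
    rintro x ⟨hx1, hx2⟩ y ⟨hy1, hy2⟩
    rw [Prod.dist_eq]
    refine max_le ?_ ?_
    · calc dist x.1 y.1 ≤ _ := Real.dist_le_of_mem_Icc hx1 hy1
        _ = 1 / 2 ^ k := hw a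
    · calc dist x.2 y.2 ≤ _ := Real.dist_le_of_mem_Icc hx2 hy2
        _ = 1 / 2 ^ k := hw b
  · have hb : Bornology.IsBounded (dyCell k a b) :=
      (Metric.isBounded_Icc _ _).prod (Metric.isBounded_Icc _ _)
    have hle : ∀ c : ℕ, (c : ℝ) / 2 ^ k ≤ ((c + 1 : ℕ) : ℝ) / 2 ^ k := by
      intro c
      have hp : (0:ℝ) < 2 ^ k := by positivity
      have := hw c
      have : (0:ℝ) < 1 / 2 ^ k := by positivity
      linarith [hw c]
    have h1 : ((a : ℝ) / 2 ^ k, (b : ℝ) / 2 ^ k) ∈ dyCell k a b :=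
      ⟨⟨le_refl _, hle a⟩, ⟨le_refl _, hle b⟩⟩
    have h2 : ((((a + 1 : ℕ) : ℝ)) / 2 ^ k, (b : ℝ) / 2 ^ k) ∈ dyCell k a b :=
      ⟨⟨hle a, le_refl _⟩, ⟨le_refl _, hle b⟩⟩
    have hd := Metric.dist_le_diam_of_mem hb h1 h2
    calc (1:ℝ) / 2 ^ k
        = dist ((a : ℝ) / 2 ^ k) (((a + 1 : ℕ) : ℝ) / 2 ^ k) := by
          rw [Real.dist_eq, abs_of_nonpos (by linarith [hle a])]
          have := hw a; push_cast at this ⊢; linarith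
      _ ≤ dist ((a : ℝ) / 2 ^ k, (b : ℝ) / 2 ^ k)
          ((((a + 1 : ℕ) : ℝ)) / 2 ^ k, (b : ℝ) / 2 ^ k) := by
          rw [Prod.dist_eq]; exact le_max_left _ _
      _ ≤ _ := hd

lemma dyCell_subset_parent (k a b : ℕ) (hk : 1 ≤ k) :
    dyCell k a b ⊆ dyCell (k - 1) (a / 2) (b / 2) := by
  have hpow : (2:ℝ) ^ (k - 1) * 2 = 2 ^ k := by
    rw [← pow_succ]; congr 1; omega
  have key : ∀ c : ℕ, Set.Icc ((c : ℝ) / 2 ^ k) ((c + 1 : ℕ) / 2 ^ k) ⊆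
      Set.Icc ((↑(c / 2) : ℝ) / 2 ^ (k - 1)) ((c / 2 + 1 : ℕ) / 2 ^ (k - 1)) := by
    intro c
    apply Set.Icc_subset_Icc
    · rw [div_le_div_iff₀ (by positivity) (by positivity), ← hpow]
      have : ((c / 2 : ℕ) : ℝ) * 2 ≤ (c : ℝ) := by
        have := Nat.div_mul_le_self c 2
        exact_mod_cast this
      nlinarith [pow_pos (by norm_num : (0:ℝ) < 2) (k-1)]
    · rw [div_le_div_iff₀ (by positivity) (by positivity), ← hpow]
      have : ((c + 1 : ℕ) : ℝ) ≤ ((c / 2 + 1 : ℕ) : ℝ) * 2 := by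
        have : c + 1 ≤ (c / 2 + 1) * 2 := by omega
        exact_mod_cast this
      nlinarith [pow_pos (by norm_num : (0:ℝ) < 2) (k-1)]
  rintro x ⟨h1, h2⟩
  exact ⟨key a h1, key b h2⟩

lemma dyCell_nonempty (k a b : ℕ) : (dyCell k a b).Nonempty := by
  have hp : (0:ℝ) < 2 ^ k := by positivity
  refine ⟨((a : ℝ) / 2 ^ k, (b : ℝ) / 2 ^ k), ⟨le_refl _, ?_⟩, ⟨le_refl _, ?_⟩⟩ <;>
  · apply div_le_div_of_nonneg_right _ hp.le
    push_cast; linarith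

lemma setDist_mono {s t s' t' : Set (ℝ × ℝ)} (hs : s ⊆ s') (ht : t ⊆ t')
    (hsn : s.Nonempty) (htn : t.Nonempty) : setDist s' t' ≤ setDist s t := by
  apply csInf_le_csInf
  · exact ⟨0, by rintro d ⟨x, _, y, _, rfl⟩; exact dist_nonneg⟩
  · obtain ⟨x, hx⟩ := hsn; obtain ⟨y, hy⟩ := htn
    exact ⟨dist x y, x, hx, y, hy, rfl⟩
  · rintro d ⟨x, hx, y, hy, rfl⟩
    exact ⟨x, hs hx, y, ht hy, rfl⟩

/-- if `(ν, ν')` is a candidate pair of dyadic cells and their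
parent cells differ, then the parents `(p(ν), p(ν'))` form a candidate pair.
The parent of the level-`k` cell with indices `(a,b)` is the level-`(k−1)` cell
with indices `(a/2, b/2)` (natural-number division). -/
theorem stmt9 (Δ : ℝ) (hΔ : 1 ≤ Δ) (k a b k' a' b' : ℕ)
    (hk : 1 ≤ k) (hk' : 1 ≤ k')
    (hpar : (k - 1, a / 2, b / 2) ≠ (k' - 1, a' / 2, b' / 2))
    (hcand : CandPair Δ (dyCell k a b) (dyCell k' a' b')) :
    CandPair Δ (dyCell (k - 1) (a / 2) (b / 2))
      (dyCell (k' - 1) (a' / 2) (b' / 2)) := by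
  obtain ⟨c1, c2, c3⟩ := hcand
  rw [diam_dyCell] at c1 c2 c3
  rw [diam_dyCell] at c1 c2 c3
  have hpow : (1:ℝ) / 2 ^ (k - 1) = 2 * (1 / 2 ^ k) := by
    have h : (2:ℝ) ^ (k-1) * 2 = 2 ^ k := by rw [← pow_succ]; congr 1; omega
    rw [div_eq_iff (by positivity)]
    field_simp [← h]
    linarith [h]
  have hpow' : (1:ℝ) / 2 ^ (k' - 1) = 2 * (1 / 2 ^ k') := by
    have h : (2:ℝ) ^ (k'-1) * 2 = 2 ^ k' := by rw [← pow_succ]; congr 1; omega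
    rw [div_eq_iff (by positivity)]
    field_simp [← h]
    linarith [h]
  have hΔ4 : (0:ℝ) < 4 * Δ := by linarith
  have h1 : (0:ℝ) < 1 / 2 ^ k := by positivity
  have h2 : (0:ℝ) < 1 / 2 ^ k' := by positivity
  refine ⟨?_, ?_, ?_⟩
  · rw [diam_dyCell, diam_dyCell, hpow, hpow', mul_div_assoc]
    rw [div_le_iff₀ hΔ4] at c1
    have : 1 / 2 ^ k / (4 * Δ) ≤ 1 / 2 ^ k' := by
      rw [div_le_iff₀ hΔ4]; linarith
    linarith
  · rw [diam_dyCell, diam_dyCell, hpow, hpow']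
    nlinarith
  · rw [diam_dyCell, diam_dyCell, hpow, hpow']
    have hmono := setDist_mono (dyCell_subset_parent k a b hk)
      (dyCell_subset_parent k' a' b' hk') (dyCell_nonempty k a b) (dyCell_nonempty k' a' b')
    calc setDist _ _ ≤ setDist (dyCell k a b) (dyCell k' a' b') := hmono
      _ ≤ 2 * (1 / 2 ^ k + 1 / 2 ^ k') := c3
      _ ≤ _ := by nlinarith
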